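/- Let F : ℝⁿ × ℤ≥0 → ℝⁿ, let V : ℝⁿ × ℤ≥0 → [0,∞) satisfy α₁(|x|) ≤ V(x,k) ≤ α₂(|x|) for all x, k with α₁, α₂ ∈ K∞, and suppose there exist l ∈ ℤ≥0, δ > 0, a bounded function p : ℤ≥0 → [0,∞) with Σ_{i=k-l}^{k} p(i) ≥ δ for all k ∈ ℤ≥0, and γ ∈ K∞ such that V(F(x,k),k+1) - V(x,k) ≤ -p(k+1)γ(V(x,k)) for all x, k. Define U(x,k) = V(x,k) + (γ(V(x,k))/(4(l+1)))·Σ_{s=k-l}^{k} Σ_{j=s}^{k} p(j). Then for all x ∈ ℝⁿ and k ∈ ℤ≥0, U(F(x,k),k+1) - U(x,k) ≤ -(δ/(4(l+1)))·γ(V(x,k)). -/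

import Mathlib

/-- A function of class K∞ (viewed on `[0,∞)`): continuous, strictly increasing,
unbounded, and vanishing at `0`. -/
def IsKInf (f : ℝ → ℝ) : Prop :=
  ContinuousOn f (Set.Ici 0) ∧ StrictMonoOn f (Set.Ici 0) ∧ f 0 = 0 ∧
    ∀ M : ℝ, ∃ x, 0 ≤ x ∧ M ≤ f x

lemma stmt8_icc_top (a b : ℤ) (h : a ≤ b + 1) :
    Finset.Icc a (b + 1) = insert (b + 1) (Finset.Icc a b) := by
  ext x; simp [Finset.mem_Icc]; omega

lemma stmt8_tele (f : ℤ → ℝ) (K : ℤ) (l : ℕ) :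
    ∑ s ∈ Finset.Icc (K + 1 - l) (K + 1), ∑ j ∈ Finset.Icc s (K + 1), f j
      = (∑ s ∈ Finset.Icc (K - l) K, ∑ j ∈ Finset.Icc s K, f j)
        - (∑ j ∈ Finset.Icc (K - l) K, f j) + ((l : ℝ) + 1) * f (K + 1) := by
  have h1 : ∀ s ∈ Finset.Icc (K + 1 - (l : ℤ)) (K + 1),
      ∑ j ∈ Finset.Icc s (K + 1), f j = (∑ j ∈ Finset.Icc s K, f j) + f (K + 1) := by
    intro s hs
    rw [Finset.mem_Icc] at hs
    rw [stmt8_icc_top s K hs.2, Finset.sum_insert (by simp [Finset.mem_Icc])]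
    ring
  have h2 : Finset.Icc (K - (l : ℤ)) K = insert (K - l) (Finset.Icc (K + 1 - l) K) := by
    ext x; simp [Finset.mem_Icc]; omega
  have h7 : ∑ s ∈ Finset.Icc (K - (l:ℤ)) K, ∑ j ∈ Finset.Icc s K, f j
      = (∑ j ∈ Finset.Icc (K - (l:ℤ)) K, f j)
        + ∑ s ∈ Finset.Icc (K + 1 - (l:ℤ)) K, ∑ j ∈ Finset.Icc s K, f j := by
    rw [h2, Finset.sum_insert (by simp [Finset.mem_Icc]), ← h2]
  have h8 : ∑ s ∈ Finset.Icc (K + 1 - (l:ℤ)) (K + 1), ∑ j ∈ Finset.Icc s K, f j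
      = (∑ j ∈ Finset.Icc (K + 1 : ℤ) K, f j)
        + ∑ s ∈ Finset.Icc (K + 1 - (l:ℤ)) K, ∑ j ∈ Finset.Icc s K, f j := by
    rw [stmt8_icc_top (K + 1 - l) K (by omega), Finset.sum_insert (by simp [Finset.mem_Icc])]
  have h5 : ∑ j ∈ Finset.Icc (K+1:ℤ) K, f j = 0 := by
    rw [Finset.Icc_eq_empty (by omega)]; simp
  have h3 : (Finset.Icc (K + 1 - (l:ℤ)) (K + 1)).card = l + 1 := by
    rw [Int.card_Icc]; omega
  rw [Finset.sum_congr rfl h1, Finset.sum_add_distrib, Finset.sum_const, h3, h8, h7, h5]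
  ring

lemma stmt8_arith (L : ℝ) (hL : (1:ℝ) ≤ L) (q δ ga gb a b S S' Q : ℝ)
    (h1 : b - a ≤ -q * ga) (hgb : gb ≤ ga) (hga : 0 ≤ ga)
    (hS' : 0 ≤ S') (hq : 0 ≤ q) (hQ : δ ≤ Q)
    (htele : S' = S - Q + L * q) :
    b + gb / (4 * L) * S' - (a + ga / (4 * L) * S) ≤ -(δ / (4 * L)) * ga := by
  have hL0 : (0:ℝ) < 4 * L := by linarith
  simp only [div_eq_mul_inv]
  set c := (4 * L)⁻¹ with hc
  have hcpos : 0 < c := by positivity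
  have hcL : c * L = 1 / 4 := by
    rw [hc]; field_simp
  have h9 : c * ga * S' = c * ga * S - c * ga * Q + q * ga / 4 := by
    rw [htele]; linear_combination (ga * q) * hcL
  nlinarith [mul_nonneg (mul_nonneg hcpos.le (sub_nonneg.2 hgb)) hS',
    mul_nonneg (mul_nonneg hcpos.le hga) (sub_nonneg.2 hQ),
    mul_nonneg hq hga, h9]

/-- Core decay estimate of Theorem 1 (with `κ = id`).
If `V(F(x,k),k+1) - V(x,k) ≤ -p(k+1)γ(V(x,k))` with `p` a bounded discrete PE
parameter (window `l`, level `δ`, extended by zero to negative indices) and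
`γ ∈ K∞`, then `U(x,k) = V(x,k) + (γ(V(x,k))/(4(l+1)))·S(k)` satisfies
`U(F(x,k),k+1) - U(x,k) ≤ -(δ/(4(l+1)))·γ(V(x,k))`. -/
theorem stmt8 (n : ℕ)
    (F : EuclideanSpace ℝ (Fin n) → ℕ → EuclideanSpace ℝ (Fin n))
    (V : EuclideanSpace ℝ (Fin n) → ℕ → ℝ)
    (α₁ α₂ γ : ℝ → ℝ) (hα₁ : IsKInf α₁) (hα₂ : IsKInf α₂) (hγ : IsKInf γ)
    (hsand : ∀ x k, α₁ ‖x‖ ≤ V x k ∧ V x k ≤ α₂ ‖x‖)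
    (p : ℤ → ℝ) (pbar : ℝ) (hpnn : ∀ i, 0 ≤ p i) (hpbd : ∀ i, p i ≤ pbar)
    (hpneg : ∀ i < 0, p i = 0)
    (l : ℕ) (δ : ℝ) (hδ : 0 < δ)
    (hPE : ∀ k : ℕ, δ ≤ ∑ i ∈ Finset.Icc ((k : ℤ) - l) (k : ℤ), p i)
    (hdecay : ∀ x k, V (F x k) (k + 1) - V x k ≤ -p ((k : ℤ) + 1) * γ (V x k)) :
    ∀ x k,
      (V (F x k) (k + 1) + γ (V (F x k) (k + 1)) / (4 * ((l : ℝ) + 1)) *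
          ∑ s ∈ Finset.Icc (((k : ℤ) + 1) - l) ((k : ℤ) + 1),
            ∑ j ∈ Finset.Icc s ((k : ℤ) + 1), p j)
        - (V x k + γ (V x k) / (4 * ((l : ℝ) + 1)) *
            ∑ s ∈ Finset.Icc ((k : ℤ) - l) (k : ℤ),
              ∑ j ∈ Finset.Icc s (k : ℤ), p j)
      ≤ -(δ / (4 * ((l : ℝ) + 1))) * γ (V x k) := by
  intro x k
  have hVnn : ∀ y m, (0:ℝ) ≤ V y m := by
    intro y m
    have h0 : α₁ 0 ≤ α₁ ‖y‖ :=
      hα₁.2.1.monotoneOn Set.self_mem_Ici (Set.mem_Ici.2 (norm_nonneg y)) (norm_nonneg y)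
    have := (hsand y m).1
    rw [hα₁.2.2.1] at h0
    linarith
  have hγnn : ∀ t : ℝ, 0 ≤ t → 0 ≤ γ t := by
    intro t ht
    have h0 : γ 0 ≤ γ t := hγ.2.1.monotoneOn Set.self_mem_Ici (Set.mem_Ici.2 ht) ht
    rw [hγ.2.2.1] at h0
    exact h0
  set a := V x k with ha
  set b := V (F x k) (k + 1) with hb
  have h1 : b - a ≤ -p ((k:ℤ) + 1) * γ a := hdecay x k
  have hq : 0 ≤ p ((k:ℤ) + 1) := hpnn _
  have hga : 0 ≤ γ a := hγnn a (hVnn x k)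
  have hba : b ≤ a := by nlinarith [mul_nonneg hq hga]
  have hgb : γ b ≤ γ a :=
    hγ.2.1.monotoneOn (Set.mem_Ici.2 (hVnn _ _)) (Set.mem_Ici.2 (hVnn x k)) hba
  have hS' : (0:ℝ) ≤ ∑ s ∈ Finset.Icc (((k : ℤ) + 1) - l) ((k : ℤ) + 1),
      ∑ j ∈ Finset.Icc s ((k : ℤ) + 1), p j :=
    Finset.sum_nonneg fun _ _ => Finset.sum_nonneg fun _ _ => hpnn _
  have hQ := hPE k
  have htele := stmt8_tele p (k : ℤ) l
  have hL : (1:ℝ) ≤ (l : ℝ) + 1 := by have : (0:ℝ) ≤ (l:ℝ) := Nat.cast_nonneg l; linarith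
  exact stmt8_arith ((l:ℝ) + 1) hL (p ((k:ℤ)+1)) δ (γ a) (γ b) a b _ _ _
    h1 hgb hga hS' hq hQ (by linarith [htele])
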